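/- Let C ≥ 2 and 1 ≤ K ≤ C−1 be integers, let B_s > 0 and L_ℓ ≥ 0, and let ℓ : ℝ → ℝ be strictly decreasing on [−B_s, B_s] and L_ℓ-Lipschitz continuous on [−B_s, B_s]. Define L_K(s, y) := (1/K) Σ_{k=1}^{K+1} ℓ(s_y − s_[k]) for s ∈ ℝ^C and y ∈ {1,…,C}. Then for all s, s' ∈ [0, B_s]^C and all y ∈ {1,…,C}: |L_K(s, y) − L_K(s', y)| ≤ (L_ℓ·√(K+1)/K)·‖s − s'‖₂ + (L_ℓ·(K+1)/K)·|s_y − s'_y|. That is, L_K is Lipschitz continuous with respect to the variant of the ℓ2-norm involving the index y, with Lipschitz constant pair (L_ℓ√(K+1)/K, L_ℓ(K+1)/K). -/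

import Mathlib

/-- The `k`-th largest entry (1-indexed, counted with multiplicity) of `s ∈ ℝ^C`. -/
noncomputable def kthLargest {C : ℕ} (s : Fin C → ℝ) (k : ℕ) : ℝ :=
  ((List.ofFn s).insertionSort (· ≤ ·)).getD (C - k) 0

/-- The AUTKC surrogate loss `L_K(s, y) = (1/K) Σ_{k=1}^{K+1} ℓ(s_y − s_[k])`. -/
noncomputable def LK {C : ℕ} (K : ℕ) (ℓ : ℝ → ℝ) (s : Fin C → ℝ) (y : Fin C) : ℝ :=
  (1 / (K : ℝ)) * ∑ k ∈ Finset.Icc 1 (K + 1), ℓ (s y - kthLargest s k)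

-- auxiliary lemmas
lemma insertionSort_ofFn_eq {C : ℕ} (s : Fin C → ℝ) :
    (List.ofFn s).insertionSort (· ≤ ·) = List.ofFn (s ∘ Tuple.sort s) := by
  refine (fun h1 h2 => List.Perm.eq_of_sortedLE List.sortedLE_insertionSort h2 h1) ?_ ?_
  · exact (List.perm_insertionSort _ _).trans ((Tuple.sort s).ofFn_comp_perm s).symm
  · exact List.sortedLE_ofFn_iff.mpr (Tuple.monotone_sort s)

lemma kthLargest_eq {C : ℕ} (s : Fin C → ℝ) (k : ℕ) (h1 : 1 ≤ k) (h2 : k ≤ C) :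
    kthLargest s k = (s ∘ Tuple.sort s) ⟨C - k, by omega⟩ := by
  have hlen : ((List.ofFn (s ∘ Tuple.sort s))).length = C := by simp
  rw [kthLargest, insertionSort_ofFn_eq, List.getD_eq_getElem _ _ (by omega)]
  simp [List.getElem_ofFn]

lemma sorted_mul_ge {n : ℕ} (a b : Fin n → ℝ) :
    ∑ i, a i * b i ≤ ∑ i, (a ∘ Tuple.sort a) i * (b ∘ Tuple.sort b) i := by
  set σa := Tuple.sort a
  set σb := Tuple.sort b
  have hmon : Monovary (a ∘ σa) (b ∘ σb) :=
    (Tuple.monotone_sort a).monovary (Tuple.monotone_sort b)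
  have key := hmon.sum_mul_comp_perm_le_sum_mul (σ := σa.trans σb.symm)
  calc ∑ i, a i * b i = ∑ i, (a ∘ σa) i * (b ∘ σa) i :=
        (Equiv.sum_comp σa (fun i => a i * b i)).symm
    _ ≤ _ := by
        refine le_trans (le_of_eq ?_) key
        refine Finset.sum_congr rfl fun i _ => ?_
        simp [Equiv.trans]

lemma sorted_sq_le {n : ℕ} (a b : Fin n → ℝ) :
    ∑ i, ((a ∘ Tuple.sort a) i - (b ∘ Tuple.sort b) i) ^ 2 ≤ ∑ i, (a i - b i) ^ 2 := by
  have h := sorted_mul_ge a b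
  have ha : ∑ i, (a ∘ Tuple.sort a) i ^ 2 = ∑ i, a i ^ 2 :=
    Equiv.sum_comp (Tuple.sort a) (fun i => a i ^ 2)
  have hb : ∑ i, (b ∘ Tuple.sort b) i ^ 2 = ∑ i, b i ^ 2 :=
    Equiv.sum_comp (Tuple.sort b) (fun i => b i ^ 2)
  have e1 : ∀ (f g : Fin n → ℝ), ∑ i, (f i - g i) ^ 2
      = ∑ i, f i ^ 2 + ∑ i, g i ^ 2 - 2 * ∑ i, f i * g i := by
    intro f g
    rw [Finset.mul_sum, ← Finset.sum_add_distrib, ← Finset.sum_sub_distrib]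
    exact Finset.sum_congr rfl fun i _ => by ring
  rw [e1, e1, ha, hb]
  linarith

/-- Lipschitz property of the AUTKC surrogate loss (Theorem 8 of the paper): if `ℓ` is
strictly decreasing and `L_ℓ`-Lipschitz on `[−B_s, B_s]` and all scores lie in
`[0, B_s]`, then `L_K` is Lipschitz continuous with respect to the variant of the
`ℓ2`-norm involving the index `y`, with Lipschitz constant pair
`(L_ℓ√(K+1)/K, L_ℓ(K+1)/K)`. -/
theorem LK_lipschitz
    (C K : ℕ) (hC : 2 ≤ C) (hK1 : 1 ≤ K) (hKC : K + 1 ≤ C)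
    (Bs Ll : ℝ) (hBs : 0 < Bs) (hLl : 0 ≤ Ll)
    (ℓ : ℝ → ℝ) (hanti : StrictAntiOn ℓ (Set.Icc (-Bs) Bs))
    (hlip : ∀ x ∈ Set.Icc (-Bs) Bs, ∀ x' ∈ Set.Icc (-Bs) Bs, |ℓ x - ℓ x'| ≤ Ll * |x - x'|)
    (s s' : Fin C → ℝ)
    (hs : ∀ i, s i ∈ Set.Icc (0 : ℝ) Bs) (hs' : ∀ i, s' i ∈ Set.Icc (0 : ℝ) Bs)
    (y : Fin C) :
    |LK K ℓ s y - LK K ℓ s' y|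
      ≤ Ll * Real.sqrt ((K : ℝ) + 1) / K * Real.sqrt (∑ i : Fin C, (s i - s' i) ^ 2)
        + Ll * ((K : ℝ) + 1) / K * |s y - s' y| := by
  have hKpos : (0:ℝ) < K := by exact_mod_cast hK1
  set T := Finset.Icc 1 (K+1) with hT
  set F : Fin C → ℝ := s ∘ Tuple.sort s with hF
  set F' : Fin C → ℝ := s' ∘ Tuple.sort s' with hF'
  have hFmem : ∀ i, F i ∈ Set.Icc (0:ℝ) Bs := fun i => hs _
  have hF'mem : ∀ i, F' i ∈ Set.Icc (0:ℝ) Bs := fun i => hs' _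
  set e : ℕ → Fin C := fun k => ⟨C - max k 1, by omega⟩ with he
  have hek : ∀ k ∈ T, kthLargest s k = F (e k) ∧ kthLargest s' k = F' (e k) := by
    intro k hk
    simp only [hT, Finset.mem_Icc] at hk
    have h1 : max k 1 = k := by omega
    constructor
    · rw [kthLargest_eq s k hk.1 (by omega)]; congr 1; simp [he, h1]
    · rw [kthLargest_eq s' k hk.1 (by omega)]; congr 1; simp [he, h1]
  -- quantities
  set B := |s y - s' y| with hB
  set A := ∑ k ∈ T, |kthLargest s k - kthLargest s' k| with hA
  set Q := ∑ k ∈ T, (kthLargest s k - kthLargest s' k)^2 with hQ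
  set S := ∑ i : Fin C, (s i - s' i)^2 with hS
  have hSnn : 0 ≤ S := Finset.sum_nonneg fun i _ => sq_nonneg _
  -- Step 1: Q ≤ S
  have hQS : Q ≤ S := by
    have hinj : Set.InjOn e T := by
      intro x hx z hz hxz
      simp only [hT, Finset.coe_Icc, Set.mem_Icc] at hx hz
      simp only [he, Fin.mk.injEq] at hxz
      omega
    calc Q = ∑ k ∈ T, (F (e k) - F' (e k))^2 := by
          refine Finset.sum_congr rfl fun k hk => ?_
          rw [(hek k hk).1, (hek k hk).2]
      _ = ∑ i ∈ T.image e, (F i - F' i)^2 := (Finset.sum_image (f := fun i => (F i - F' i)^2) (fun x hx z hz => hinj hx hz)).symm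
      _ ≤ ∑ i : Fin C, (F i - F' i)^2 := by
          refine Finset.sum_le_sum_of_subset_of_nonneg (Finset.subset_univ _)
            (fun i _ _ => sq_nonneg _)
      _ ≤ S := sorted_sq_le s s'
  -- Step 2: A ≤ √(K+1) √Q
  have hAQ : A ≤ Real.sqrt ((K:ℝ)+1) * Real.sqrt Q := by
    have hcs := Finset.sum_mul_sq_le_sq_mul_sq T (fun _ => (1:ℝ))
      (fun k => |kthLargest s k - kthLargest s' k|)
    simp only [one_mul, one_pow, sq_abs] at hcs
    have hcard : ∑ _k ∈ T, (1:ℝ) = (K:ℝ) + 1 := by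
      simp [hT, Nat.card_Icc]
    rw [hcard] at hcs
    have hAnn : 0 ≤ A := Finset.sum_nonneg fun k _ => abs_nonneg _
    calc A = Real.sqrt (A^2) := (Real.sqrt_sq hAnn).symm
      _ ≤ Real.sqrt (((K:ℝ)+1) * Q) := Real.sqrt_le_sqrt hcs
      _ = _ := Real.sqrt_mul (by positivity) _
  -- Step 3: pointwise Lipschitz
  have hpt : ∀ k ∈ T, |ℓ (s y - kthLargest s k) - ℓ (s' y - kthLargest s' k)|
      ≤ Ll * (B + |kthLargest s k - kthLargest s' k|) := by
    intro k hk
    have h1 := (hek k hk).1; have h2 := (hek k hk).2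
    have hm1 : s y - kthLargest s k ∈ Set.Icc (-Bs) Bs := by
      have := hs y; have := hFmem (e k); rw [h1]
      simp only [Set.mem_Icc] at *; constructor <;> linarith
    have hm2 : s' y - kthLargest s' k ∈ Set.Icc (-Bs) Bs := by
      have := hs' y; have := hF'mem (e k); rw [h2]
      simp only [Set.mem_Icc] at *; constructor <;> linarith
    refine le_trans (hlip _ hm1 _ hm2) ?_
    refine mul_le_mul_of_nonneg_left ?_ hLl
    calc |s y - kthLargest s k - (s' y - kthLargest s' k)|
        = |(s y - s' y) + (kthLargest s' k - kthLargest s k)| := by ring_nf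
      _ ≤ |s y - s' y| + |kthLargest s' k - kthLargest s k| := abs_add_le _ _
      _ = B + |kthLargest s k - kthLargest s' k| := by
          rw [hB, abs_sub_comm (kthLargest s' k) (kthLargest s k)]
  -- Main chain
  have hmain : |LK K ℓ s y - LK K ℓ s' y| ≤ (1/(K:ℝ)) * (Ll * (((K:ℝ)+1) * B + A)) := by
    rw [LK, LK, ← mul_sub, abs_mul, ← Finset.sum_sub_distrib]
    rw [abs_of_pos (by positivity : (0:ℝ) < 1/(K:ℝ))]
    refine mul_le_mul_of_nonneg_left ?_ (by positivity)
    calc |∑ k ∈ T, (ℓ (s y - kthLargest s k) - ℓ (s' y - kthLargest s' k))|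
        ≤ ∑ k ∈ T, |ℓ (s y - kthLargest s k) - ℓ (s' y - kthLargest s' k)| :=
          Finset.abs_sum_le_sum_abs _ _
      _ ≤ ∑ k ∈ T, Ll * (B + |kthLargest s k - kthLargest s' k|) :=
          Finset.sum_le_sum hpt
      _ = Ll * (((K:ℝ)+1) * B + A) := by
          rw [← Finset.mul_sum, Finset.sum_add_distrib, ← hA, Finset.sum_const]
          simp [hT, Nat.card_Icc]
  refine hmain.trans ?_
  have hArest : A ≤ Real.sqrt ((K:ℝ)+1) * Real.sqrt S :=
    hAQ.trans (mul_le_mul_of_nonneg_left (Real.sqrt_le_sqrt hQS) (Real.sqrt_nonneg _))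
  have hBnn : 0 ≤ B := abs_nonneg _
  have expand : (1/(K:ℝ)) * (Ll * (((K:ℝ)+1) * B + A))
      = Ll * ((K:ℝ)+1) / K * B + Ll / K * A := by field_simp
  rw [expand]
  have h2 : Ll / K * A ≤ Ll * Real.sqrt ((K:ℝ)+1) / K * Real.sqrt S := by
    calc Ll / K * A ≤ Ll / K * (Real.sqrt ((K:ℝ)+1) * Real.sqrt S) :=
          mul_le_mul_of_nonneg_left hArest (by positivity)
      _ = Ll * Real.sqrt ((K:ℝ)+1) / K * Real.sqrt S := by ring
  linarith
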